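/- Let G = (S, s0, 𝔸, κ, L) be a CGS, ṡ ∈ S, φ' a HyperATL*_S state formula with free path variables V ∪ {π}, A ⊆ Agts, and ξ a sharing constraint with ξ ⊆ (A×A) ∪ (Ā×Ā). If D is a DPA over alphabet (V ∪ {π}) → S that is (G, ṡ)-equivalent to φ', then the APA A^× obtained from the product construction for the existential quantifier ⟪A⟫_ξ π is (G, ṡ)-equivalent to ⟪A⟫_ξ π. φ'; that is, for every path assignment Π : V → S^ω, zip(Π) ∈ L(A^×) if and only if ṡ, Π ⊨_G ⟪A⟫_ξ π. φ'. -/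

import Mathlib

namespace HyperATLS

attribute [local instance] Classical.propDecidable

set_option linter.unusedVariables false

/-! ### Concurrent game structures, strategies, plays -/

/-- Nonempty finite sequences over `S`. -/
abbrev NEList (S : Type) : Type := {l : List S // l ≠ []}

/-- A concurrent game structure with agents `Agt`, atomic propositions `AP`,
states `S` and actions `Act`. -/
structure CGS (Agt AP S Act : Type) where
  init : S
  trans : S → (Agt → Act) → S
  label : S → Set AP

/-- A strategy maps nonempty finite sequences of states to actions. -/
abbrev Strategy (S Act : Type) : Type := NEList S → Act

variable {Agt AP S Act Var : Type}

/-- The history `[p 0, …, p k]` of the play from `s` under the strategy vector `F`. -/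
def CGS.hist (G : CGS Agt AP S Act) (s : S) (F : Agt → Strategy S Act) : ℕ → NEList S
  | 0 => ⟨[s], by simp⟩
  | k + 1 =>
    let h := G.hist s F k
    ⟨h.1 ++ [G.trans (h.1.getLast h.2) fun i => F i h], by simp⟩

/-- `Play_G(s, F)`, the `k`-th state of the unique play from `s` under `F`. -/
def CGS.play (G : CGS Agt AP S Act) (s : S) (F : Agt → Strategy S Act) (k : ℕ) : S :=
  (G.hist s F k).1.getLast (G.hist s F k).2

/-- Combine a strategy vector for `A` with one for the complement `Aᶜ`:  `F ⊕ F'`. -/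
noncomputable def combine (A : Set Agt) (F : ↥A → Strategy S Act)
    (F' : ↥(Aᶜ) → Strategy S Act) : Agt → Strategy S Act := fun i =>
  if h : i ∈ A then F ⟨i, h⟩ else F' ⟨i, h⟩

/-- `shr_G(A, ξ)`: strategy vectors for `A` in which agents related by `ξ` share strategies. -/
def shr (A : Set Agt) (ξ : Set (Agt × Agt)) : Set (↥A → Strategy S Act) :=
  {F | ∀ i j : ↥A, ((i : Agt), (j : Agt)) ∈ ξ → F i = F j}

/-! ### HyperATL*_S syntax -/

mutual
/-- HyperATL*_S path formulas. -/
inductive HPath (Agt AP Var : Type) : Type where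
  | atom : AP → Var → HPath Agt AP Var
  | conj : HPath Agt AP Var → HPath Agt AP Var → HPath Agt AP Var
  | neg : HPath Agt AP Var → HPath Agt AP Var
  | next : HPath Agt AP Var → HPath Agt AP Var
  | untl : HPath Agt AP Var → HPath Agt AP Var → HPath Agt AP Var
  | state : HState Agt AP Var → Var → HPath Agt AP Var

/-- HyperATL*_S state formulas. -/
inductive HState (Agt AP Var : Type) : Type where
  | ex : Set Agt → Set (Agt × Agt) → Var → HState Agt AP Var → HState Agt AP Var
  | all : Set Agt → Set (Agt × Agt) → Var → HState Agt AP Var → HState Agt AP Var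
  | path : HPath Agt AP Var → HState Agt AP Var
end

/-- Partial path assignments: `Π : V ⇀ S^ω`. -/
abbrev PathAssign (Var S : Type) : Type := Var → Option (ℕ → S)

/-- `Π[k,∞]`: shift every assigned path by `k`. -/
def shiftPA (Pa : PathAssign Var S) (k : ℕ) : PathAssign Var S :=
  fun v => (Pa v).map fun p n => p (n + k)

/-! ### HyperATL*_S semantics -/

mutual
/-- `Π ⊨_G ψ` for path formulas. -/
def HPath.sat (G : CGS Agt AP S Act) (Pa : PathAssign Var S) :
    HPath Agt AP Var → Prop
  | .atom a π => ∃ p, Pa π = some p ∧ a ∈ G.label (p 0)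
  | .conj ψ₁ ψ₂ => HPath.sat G Pa ψ₁ ∧ HPath.sat G Pa ψ₂
  | .neg ψ => ¬ HPath.sat G Pa ψ
  | .next ψ => HPath.sat G (shiftPA Pa 1) ψ
  | .untl ψ₁ ψ₂ => ∃ k, HPath.sat G (shiftPA Pa k) ψ₂ ∧
      ∀ m, m < k → HPath.sat G (shiftPA Pa m) ψ₁
  | .state φ π => ∃ p, Pa π = some p ∧ HState.sat G (p 0) (fun _ => none) φ

/-- `s, Π ⊨_G φ` for state formulas. -/
def HState.sat (G : CGS Agt AP S Act) (s : S) (Pa : PathAssign Var S) :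
    HState Agt AP Var → Prop
  | .ex A ξ π φ => ∃ F : ↥A → Strategy S Act, F ∈ shr A ξ ∧
      ∀ F' : ↥(Aᶜ) → Strategy S Act, F' ∈ shr (Aᶜ) ξ →
        HState.sat G s (Function.update Pa π (some (G.play s (combine A F F')))) φ
  | .all A ξ π φ => ∀ F : ↥A → Strategy S Act, F ∈ shr A ξ →
      ∃ F' : ↥(Aᶜ) → Strategy S Act, F' ∈ shr (Aᶜ) ξ ∧
        HState.sat G s (Function.update Pa π (some (G.play s (combine A F F')))) φ
  | .path ψ => HPath.sat G Pa ψ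
end

/-- `G ⊨ φ`. -/
def CGS.models (G : CGS Agt AP S Act) (φ : HState Agt AP Var) : Prop :=
  HState.sat G G.init (fun _ => none) φ

/-! ### Closedness, free variables, atomic propositions, substitution -/

mutual
/-- Well-formedness of a path formula w.r.t. a set `B` of bound path variables:
every indexed atom lies under a binding quantifier and nested state formulas are closed. -/
def HPath.wf (B : Set Var) : HPath Agt AP Var → Prop
  | .atom _ π => π ∈ B
  | .conj ψ₁ ψ₂ => HPath.wf B ψ₁ ∧ HPath.wf B ψ₂
  | .neg ψ => HPath.wf B ψ
  | .next ψ => HPath.wf B ψ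
  | .untl ψ₁ ψ₂ => HPath.wf B ψ₁ ∧ HPath.wf B ψ₂
  | .state φ π => π ∈ B ∧ HState.wf (∅ : Set Var) φ

/-- Well-formedness of a state formula w.r.t. a set `B` of bound path variables. -/
def HState.wf (B : Set Var) : HState Agt AP Var → Prop
  | .ex _ _ π φ => HState.wf (insert π B) φ
  | .all _ _ π φ => HState.wf (insert π B) φ
  | .path ψ => HPath.wf B ψ
end

/-- A state formula is closed if all its indexed atoms are bound. -/
def HState.Closed (φ : HState Agt AP Var) : Prop := HState.wf (∅ : Set Var) φ

mutual
/-- Free path variables of a path formula. -/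
def HPath.freeP : HPath Agt AP Var → Set Var
  | .atom _ π => {π}
  | .conj ψ₁ ψ₂ => HPath.freeP ψ₁ ∪ HPath.freeP ψ₂
  | .neg ψ => HPath.freeP ψ
  | .next ψ => HPath.freeP ψ
  | .untl ψ₁ ψ₂ => HPath.freeP ψ₁ ∪ HPath.freeP ψ₂
  | .state φ π => insert π (HState.freeS φ)

/-- Free path variables of a state formula. -/
def HState.freeS : HState Agt AP Var → Set Var
  | .ex _ _ π φ => HState.freeS φ \ {π}
  | .all _ _ π φ => HState.freeS φ \ {π}
  | .path ψ => HPath.freeP ψ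
end

mutual
/-- Atomic propositions occurring in a path formula. -/
def HPath.apsP : HPath Agt AP Var → Set AP
  | .atom a _ => {a}
  | .conj ψ₁ ψ₂ => HPath.apsP ψ₁ ∪ HPath.apsP ψ₂
  | .neg ψ => HPath.apsP ψ
  | .next ψ => HPath.apsP ψ
  | .untl ψ₁ ψ₂ => HPath.apsP ψ₁ ∪ HPath.apsP ψ₂
  | .state φ _ => HState.apsS φ

/-- Atomic propositions occurring in a state formula. -/
def HState.apsS : HState Agt AP Var → Set AP
  | .ex _ _ _ φ => HState.apsS φ
  | .all _ _ _ φ => HState.apsS φ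
  | .path ψ => HPath.apsP ψ
end

mutual
/-- Replace every occurrence of the nested state-formula atom `φ'_ρ` by the
indexed atomic proposition `p_ρ`. -/
noncomputable def HPath.substN (φ' : HState Agt AP Var) (p : AP) :
    HPath Agt AP Var → HPath Agt AP Var
  | .atom a π => .atom a π
  | .conj ψ₁ ψ₂ => .conj (HPath.substN φ' p ψ₁) (HPath.substN φ' p ψ₂)
  | .neg ψ => .neg (HPath.substN φ' p ψ)
  | .next ψ => .next (HPath.substN φ' p ψ)
  | .untl ψ₁ ψ₂ => .untl (HPath.substN φ' p ψ₁) (HPath.substN φ' p ψ₂)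
  | .state φ π => if φ = φ' then .atom p π else .state (HState.substN φ' p φ) π

/-- Substitution on state formulas. -/
noncomputable def HState.substN (φ' : HState Agt AP Var) (p : AP) :
    HState Agt AP Var → HState Agt AP Var
  | .ex A ξ π φ => .ex A ξ π (HState.substN φ' p φ)
  | .all A ξ π φ => .all A ξ π (HState.substN φ' p φ)
  | .path ψ => .path (HPath.substN φ' p ψ)
end

/-- A path formula contains no nested state formulas. -/
def HPath.noState : HPath Agt AP Var → Prop
  | .atom _ _ => True
  | .conj ψ₁ ψ₂ => HPath.noState ψ₁ ∧ HPath.noState ψ₂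
  | .neg ψ => HPath.noState ψ
  | .next ψ => HPath.noState ψ
  | .untl ψ₁ ψ₂ => HPath.noState ψ₁ ∧ HPath.noState ψ₂
  | .state _ _ => False

/-- A state formula of the form `⟨A₁⟩_{ξ₁} π₁ … ⟨Aₙ⟩_{ξₙ} πₙ. ψ` where the path formula `ψ`
contains no nested state formulas. -/
def HState.prefixForm : HState Agt AP Var → Prop
  | .ex _ _ _ φ => HState.prefixForm φ
  | .all _ _ _ φ => HState.prefixForm φ
  | .path ψ => HPath.noState ψ

/-! ### ATL* -/

mutual
/-- ATL* path formulas. -/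
inductive APath (Agt AP : Type) : Type where
  | atom : AP → APath Agt AP
  | conj : APath Agt AP → APath Agt AP → APath Agt AP
  | neg : APath Agt AP → APath Agt AP
  | next : APath Agt AP → APath Agt AP
  | untl : APath Agt AP → APath Agt AP → APath Agt AP
  | state : AState Agt AP → APath Agt AP

/-- ATL* state formulas. -/
inductive AState (Agt AP : Type) : Type where
  | ex : Set Agt → APath Agt AP → AState Agt AP
  | all : Set Agt → APath Agt AP → AState Agt AP
end

mutual
/-- `p ⊨_G ψ` for ATL* path formulas. -/
def APath.sat (G : CGS Agt AP S Act) (p : ℕ → S) : APath Agt AP → Prop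
  | .atom a => a ∈ G.label (p 0)
  | .conj ψ₁ ψ₂ => APath.sat G p ψ₁ ∧ APath.sat G p ψ₂
  | .neg ψ => ¬ APath.sat G p ψ
  | .next ψ => APath.sat G (fun n => p (n + 1)) ψ
  | .untl ψ₁ ψ₂ => ∃ k, APath.sat G (fun n => p (n + k)) ψ₂ ∧
      ∀ m, m < k → APath.sat G (fun n => p (n + m)) ψ₁
  | .state φ => AState.sat G (p 0) φ

/-- `s ⊨_G φ` for ATL* state formulas. -/
def AState.sat (G : CGS Agt AP S Act) (s : S) : AState Agt AP → Prop
  | .ex A ψ => ∃ F : ↥A → Strategy S Act, ∀ F' : ↥(Aᶜ) → Strategy S Act,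
      APath.sat G (G.play s (combine A F F')) ψ
  | .all A ψ => ∀ F : ↥A → Strategy S Act, ∃ F' : ↥(Aᶜ) → Strategy S Act,
      APath.sat G (G.play s (combine A F F')) ψ
end

/-- `G ⊨_ATL* φ`. -/
def CGS.modelsATL (G : CGS Agt AP S Act) (φ : AState Agt AP) : Prop :=
  AState.sat G G.init φ

mutual
/-- The translation `[·]` from ATL* path formulas to HyperATL*_S path formulas,
using the single fixed path variable `()`. -/
def APath.toHyper : APath Agt AP → HPath Agt AP Unit
  | .atom a => .atom a ()
  | .conj ψ₁ ψ₂ => .conj (APath.toHyper ψ₁) (APath.toHyper ψ₂)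
  | .neg ψ => .neg (APath.toHyper ψ)
  | .next ψ => .next (APath.toHyper ψ)
  | .untl ψ₁ ψ₂ => .untl (APath.toHyper ψ₁) (APath.toHyper ψ₂)
  | .state φ => .state (AState.toHyper φ) ()

/-- The translation `[·]` from ATL* state formulas to HyperATL*_S state formulas:
each quantifier binds the fixed path variable `()` with the empty sharing constraint. -/
def AState.toHyper : AState Agt AP → HState Agt AP Unit
  | .ex A ψ => .ex A ∅ () (.path (APath.toHyper ψ))
  | .all A ψ => .all A ∅ () (.path (APath.toHyper ψ))
end
/-! ### Alternating parity automata -/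

/-- Positive Boolean formulas over `Q`. -/
inductive PosBool (Q : Type) : Type where
  | var : Q → PosBool Q
  | conj : PosBool Q → PosBool Q → PosBool Q
  | disj : PosBool Q → PosBool Q → PosBool Q

/-- Satisfaction of a positive Boolean formula by a set of states. -/
def PosBool.Sat {Q : Type} (X : Set Q) : PosBool Q → Prop
  | .var q => q ∈ X
  | .conj θ₁ θ₂ => PosBool.Sat X θ₁ ∧ PosBool.Sat X θ₂
  | .disj θ₁ θ₂ => PosBool.Sat X θ₁ ∨ PosBool.Sat X θ₂

/-- An alternating parity automaton with states `Q` over alphabet `Alph`. -/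
structure APA (Q Alph : Type) where
  init : Q
  δ : Q → Alph → PosBool Q
  color : Q → ℕ

/-- The minimal color occurring infinitely often in `col` is even. -/
def ParityAccept (col : ℕ → ℕ) : Prop :=
  ∃ c, Even c ∧ {k | col k = c}.Infinite ∧ ∀ c', c' < c → {k | col k = c'}.Finite

/-- A run tree of an APA `A` on the word `u`: a set `T ⊆ ℕ*` of nodes containing the
root `ε`, labeled by states such that the root is labeled by the initial state and, for
every node `τ ∈ T`, the set of labels of its children satisfies `δ(ℓ(τ), u(|τ|))`. -/
structure RunTree {Q Alph : Type} (A : APA Q Alph) (u : ℕ → Alph) where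
  T : Set (List ℕ)
  label : List ℕ → Q
  root_mem : ([] : List ℕ) ∈ T
  root_label : label [] = A.init
  consistent : ∀ τ ∈ T,
    PosBool.Sat {q | ∃ n : ℕ, τ ++ [n] ∈ T ∧ label (τ ++ [n]) = q}
      (A.δ (label τ) (u τ.length))

/-- The node at depth `k` along the infinite branch `b`. -/
def branchNode (b : ℕ → ℕ) (k : ℕ) : List ℕ := (List.range k).map b

/-- A run tree is accepting if on every infinite branch the minimal color occurring
infinitely often is even. -/
def RunTree.Accepting {Q Alph : Type} {A : APA Q Alph} {u : ℕ → Alph}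
    (rt : RunTree A u) : Prop :=
  ∀ b : ℕ → ℕ, (∀ k, branchNode b k ∈ rt.T) →
    ParityAccept fun k => A.color (rt.label (branchNode b k))

/-- The language of an APA. -/
def APA.Lang {Q Alph : Type} (A : APA Q Alph) : Set (ℕ → Alph) :=
  {u | ∃ rt : RunTree A u, rt.Accepting}

/-- A deterministic parity automaton. -/
structure DPA (Q Alph : Type) where
  init : Q
  δ : Q → Alph → Q
  color : Q → ℕ

/-- The unique run of a DPA on a word. -/
def DPA.run {Q Alph : Type} (D : DPA Q Alph) (u : ℕ → Alph) : ℕ → Q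
  | 0 => D.init
  | k + 1 => D.δ (DPA.run D u k) (u k)

/-- The language of a DPA. -/
def DPA.Lang {Q Alph : Type} (D : DPA Q Alph) : Set (ℕ → Alph) :=
  {u | ParityAccept fun k => D.color (D.run u k)}

/-- A DPA viewed as an APA. -/
def DPA.toAPA {Q Alph : Type} (D : DPA Q Alph) : APA Q Alph where
  init := D.init
  δ := fun q l => .var (D.δ q l)
  color := D.color

/-! ### Zipping, `(G, sDot)`-equivalence and the product construction -/

/-- `zip(Π)`: zip a path assignment into an infinite word. -/
def zipAssign {V S : Type} (Pa : V → ℕ → S) : ℕ → (V → S) := fun k v => Pa v k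

/-- View a total assignment on a set `V` of path variables as a partial path assignment. -/
noncomputable def toAssign (V : Set Var) (Pa : ↥V → ℕ → S) : PathAssign Var S :=
  fun v => if h : v ∈ V then some (Pa ⟨v, h⟩) else none

/-- An automaton over the alphabet `↥V → S` is `(G, sDot)`-equivalent to a HyperATL*_S state
formula `φ` with free path variables `V` iff for every path assignment `Π : V → S^ω`:
`zip(Π) ∈ L(A)` if and only if `sDot, Π ⊨_G φ`. -/
def APAEquiv {Q : Type} (G : CGS Agt AP S Act) (sDot : S) (V : Set Var)
    (A : APA Q (↥V → S)) (φ : HState Agt AP Var) : Prop :=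
  ∀ Pa : ↥V → ℕ → S, zipAssign Pa ∈ A.Lang ↔ HState.sat G sDot (toAssign V Pa) φ

/-- Finitary disjunction (over a finite nonempty index type). -/
noncomputable def PosBool.iOr {ι Q : Type} [Finite ι] [Nonempty ι]
    (f : ι → PosBool Q) : PosBool Q :=
  letI : Fintype ι := Fintype.ofFinite ι
  (Finset.univ.toList.map f).foldl .disj (f (Classical.arbitrary ι))

/-- Finitary conjunction (over a finite nonempty index type). -/
noncomputable def PosBool.iAnd {ι Q : Type} [Finite ι] [Nonempty ι]
    (f : ι → PosBool Q) : PosBool Q :=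
  letI : Fintype ι := Fintype.ofFinite ι
  (Finset.univ.toList.map f).foldl .conj (f (Classical.arbitrary ι))

/-- Action vectors for the agents in `A` respecting the sharing constraint `ξ`. -/
abbrev ShrVec (A : Set Agt) (ξ : Set (Agt × Agt)) (Act : Type) : Type :=
  {a : ↥A → Act // ∀ i j : ↥A, ((i : Agt), (j : Agt)) ∈ ξ → a i = a j}

instance {A : Set Agt} {ξ : Set (Agt × Agt)} [Nonempty Act] :
    Nonempty (ShrVec A ξ Act) :=
  ⟨⟨fun _ => Classical.arbitrary Act, fun _ _ _ => rfl⟩⟩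

/-- Combine an action vector for `A` with one for `Aᶜ`: `a ⊕ a'`. -/
noncomputable def combineVec (A : Set Agt) (a : ↥A → Act) (a' : ↥(Aᶜ) → Act) :
    Agt → Act := fun i =>
  if h : i ∈ A then a ⟨i, h⟩ else a' ⟨i, h⟩

/-- `l[π ↦ s]`: extend a letter `l : V → S` to a letter over `V ∪ {π}`. -/
noncomputable def extendLetter {V : Set Var} (π : Var) (l : ↥V → S) (s : S) :
    ↥(insert π V) → S := fun v =>
  if h : (v : Var) = π then s
  else l ⟨v, (Set.mem_insert_iff.mp v.2).resolve_left h⟩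

/-- The product construction for the existential quantifier `⟪A⟫_ξ π`. -/
noncomputable def productEx {Q : Type} [Finite Agt] [Finite Act] [Nonempty Act]
    (G : CGS Agt AP S Act) (sDot : S) (A : Set Agt) (ξ : Set (Agt × Agt))
    (V : Set Var) (π : Var) (D : DPA Q (↥(insert π V) → S)) :
    APA (Q × S) (↥V → S) where
  init := (D.init, sDot)
  δ := fun qs l =>
    PosBool.iOr fun a : ShrVec A ξ Act =>
      PosBool.iAnd fun a' : ShrVec (Aᶜ) ξ Act =>
        PosBool.var (D.δ qs.1 (extendLetter π l qs.2),
          G.trans qs.2 (combineVec A a.1 a'.1))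
  color := fun qs => D.color qs.1

/-- The product construction for the universal quantifier `⟦A⟧_ξ π`. -/
noncomputable def productAll {Q : Type} [Finite Agt] [Finite Act] [Nonempty Act]
    (G : CGS Agt AP S Act) (sDot : S) (A : Set Agt) (ξ : Set (Agt × Agt))
    (V : Set Var) (π : Var) (D : DPA Q (↥(insert π V) → S)) :
    APA (Q × S) (↥V → S) where
  init := (D.init, sDot)
  δ := fun qs l =>
    PosBool.iAnd fun a : ShrVec A ξ Act =>
      PosBool.iOr fun a' : ShrVec (Aᶜ) ξ Act =>
        PosBool.var (D.δ qs.1 (extendLetter π l qs.2),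
          G.trans qs.2 (combineVec A a.1 a'.1))
  color := fun qs => D.color qs.1
/-! ### Concrete alphabets, automata and the running-example CGS -/

/-- The alphabet `Σ = {a, b, c}`. -/
inductive ABC : Type where
  | a | b | c
deriving DecidableEq

/-- States `{q0, q1, q2, q3}` of the example APA. -/
inductive QABC : Type where
  | q0 | q1 | q2 | q3
deriving DecidableEq

/-- The example APA of Example 3: `δ(q0, l) = q0 ∧ (q1 ∨ q2)` for every letter,
`q1` waits for an `a`, `q2` waits for a `b`, and `q3` is an accepting sink. -/
def exampleAPA : APA QABC ABC where
  init := .q0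
  δ := fun q l =>
    match q, l with
    | .q0, _ => .conj (.var .q0) (.disj (.var .q1) (.var .q2))
    | .q1, .a => .var .q3
    | .q1, _ => .var .q1
    | .q2, .b => .var .q3
    | .q2, _ => .var .q2
    | .q3, _ => .var .q3
  color := fun q =>
    match q with
    | .q0 => 0
    | .q1 => 1
    | .q2 => 1
    | .q3 => 0

/-- States `{q1, q3}` of the sub-automaton `A₁`. -/
inductive QA1 : Type where
  | q1 | q3
deriving DecidableEq

/-- The APA `A₁`: from `q1` move to the accepting sink `q3` on letter `a`. -/
def exampleAPA1 : APA QA1 ABC where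
  init := .q1
  δ := fun q l =>
    match q, l with
    | .q1, .a => .var .q3
    | .q1, _ => .var .q1
    | .q3, _ => .var .q3
  color := fun q =>
    match q with
    | .q1 => 1
    | .q3 => 0

/-- The two path variables `π` and `π'`. -/
inductive PVar : Type where
  | pi | pi'
deriving DecidableEq

/-- The states `{s0, s1, s2}` of the running-example CGS. -/
inductive St : Type where
  | s0 | s1 | s2
deriving DecidableEq

/-- The agents `{sched, W1, W2}` of the running-example CGS. -/
inductive Ag : Type where
  | sched | w1 | w2
deriving DecidableEq

/-- The actions: `g`/`ng` for the scheduler and `r`/`nr` for the workers. -/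
inductive ActEx : Type where
  | g | ng | r | nr
deriving DecidableEq

/-- The running-example CGS: granted requests of both workers lead directly to the
working state `s2`; a granted single request passes through `s1`. -/
def exampleCGS : CGS Ag Unit St ActEx where
  init := .s0
  trans := fun s a =>
    match s with
    | .s0 =>
      if a .sched = .g then
        if a .w1 = .r ∧ a .w2 = .r then .s2
        else if a .w1 = .r ∨ a .w2 = .r then .s1
        else .s0
      else .s0
    | .s1 => .s2
    | .s2 => .s0
  label := fun s =>
    match s with
    | .s2 => {()}
    | _ => (∅ : Set Unit)

/-- The path formula `(¬ w_{π'}) U (¬ w_{π'} ∧ w_π)`, where `w` is the unique atomic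
proposition `()`. -/
def exampleBody : HPath Ag Unit PVar :=
  .untl (.neg (.atom () .pi')) (.conj (.neg (.atom () .pi')) (.atom () .pi))

/-- The state formula `⟦{sched, W1}⟧_∅ π'. (¬ w_{π'}) U (¬ w_{π'} ∧ w_π)`. -/
def exampleInner : HState Ag Unit PVar :=
  .all {Ag.sched, Ag.w1} ∅ .pi' (.path exampleBody)

/-- The state formula
`⟪{sched, W1, W2}⟫_∅ π. ⟦{sched, W1}⟧_∅ π'. (¬ w_{π'}) U (¬ w_{π'} ∧ w_π)`. -/
def exampleFormula : HState Ag Unit PVar :=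
  .ex {Ag.sched, Ag.w1, Ag.w2} ∅ .pi exampleInner

/-- States `{q0, q1, q2}` of the example DPA. -/
inductive QD : Type where
  | q0 | q1 | q2
deriving DecidableEq

/-- The example DPA over the alphabet `{π, π'} → {s0, s1, s2}`. -/
def exampleDPA : DPA QD (PVar → St) where
  init := .q0
  δ := fun q l =>
    match q with
    | .q0 => if l .pi' = .s2 then .q2 else if l .pi = .s2 then .q1 else .q0
    | .q1 => .q1
    | .q2 => .q2
  color := fun q =>
    match q with
    | .q0 => 1
    | .q1 => 0
    | .q2 => 1

/-! ### Auxiliary lemmas for the product construction -/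

section ProductAux

variable {Agt AP S Act Var Q : Type}

lemma sat_foldl_disj {Q' : Type} (X : Set Q') (l : List (PosBool Q')) (init : PosBool Q') :
    PosBool.Sat X (l.foldl .disj init) ↔ PosBool.Sat X init ∨ ∃ θ ∈ l, PosBool.Sat X θ := by
  induction l generalizing init with
  | nil => simp [List.foldl]
  | cons θ l ih =>
    rw [List.foldl_cons, ih]
    simp only [PosBool.Sat, List.mem_cons]
    constructor
    · rintro (( h | h) | ⟨θ', hθ', h⟩)
      · exact Or.inl h
      · exact Or.inr ⟨θ, Or.inl rfl, h⟩
      · exact Or.inr ⟨θ', Or.inr hθ', h⟩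
    · rintro (h | ⟨θ', (rfl | hθ'), h⟩)
      · exact Or.inl (Or.inl h)
      · exact Or.inl (Or.inr h)
      · exact Or.inr ⟨θ', hθ', h⟩

lemma sat_foldl_conj {Q' : Type} (X : Set Q') (l : List (PosBool Q')) (init : PosBool Q') :
    PosBool.Sat X (l.foldl .conj init) ↔ PosBool.Sat X init ∧ ∀ θ ∈ l, PosBool.Sat X θ := by
  induction l generalizing init with
  | nil => simp [List.foldl]
  | cons θ l ih =>
    rw [List.foldl_cons, ih]
    simp only [PosBool.Sat, List.mem_cons]
    constructor
    · rintro ⟨⟨h1, h2⟩, h3⟩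
      exact ⟨h1, by rintro θ' (rfl | hθ') <;> [exact h2; exact h3 θ' hθ']⟩
    · rintro ⟨h1, h2⟩
      exact ⟨⟨h1, h2 θ (Or.inl rfl)⟩, fun θ' hθ' => h2 θ' (Or.inr hθ')⟩

lemma sat_iOr {ι Q' : Type} [Finite ι] [Nonempty ι] (X : Set Q') (f : ι → PosBool Q') :
    PosBool.Sat X (PosBool.iOr f) ↔ ∃ i, PosBool.Sat X (f i) := by
  letI : Fintype ι := Fintype.ofFinite ι
  show PosBool.Sat X ((Finset.univ.toList.map f).foldl .disj (f (Classical.arbitrary ι))) ↔ _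
  rw [sat_foldl_disj]
  constructor
  · rintro (h | ⟨θ, hθ, h⟩)
    · exact ⟨_, h⟩
    · obtain ⟨i, -, rfl⟩ := List.mem_map.mp hθ
      exact ⟨i, h⟩
  · rintro ⟨i, h⟩
    exact Or.inr ⟨f i, List.mem_map_of_mem (f := f) (by simp), h⟩

lemma sat_iAnd {ι Q' : Type} [Finite ι] [Nonempty ι] (X : Set Q') (f : ι → PosBool Q') :
    PosBool.Sat X (PosBool.iAnd f) ↔ ∀ i, PosBool.Sat X (f i) := by
  letI : Fintype ι := Fintype.ofFinite ι
  show PosBool.Sat X ((Finset.univ.toList.map f).foldl .conj (f (Classical.arbitrary ι))) ↔ _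
  rw [sat_foldl_conj]
  constructor
  · rintro ⟨h1, h2⟩ i
    exact h2 (f i) (List.mem_map_of_mem (f := f) (by simp))
  · intro h
    refine ⟨h _, ?_⟩
    rintro θ hθ
    obtain ⟨i, -, rfl⟩ := List.mem_map.mp hθ
    exact h i

lemma branchNode_zero (b : ℕ → ℕ) : branchNode b 0 = [] := rfl

lemma branchNode_succ (b : ℕ → ℕ) (k : ℕ) :
    branchNode b (k + 1) = branchNode b k ++ [b k] := by
  simp [branchNode, List.range_succ]

lemma branchNode_length (b : ℕ → ℕ) (k : ℕ) : (branchNode b k).length = k := by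
  simp [branchNode]

lemma hist_length (G : CGS Agt AP S Act) (s : S) (F : Agt → Strategy S Act) (k : ℕ) :
    (G.hist s F k).1.length = k + 1 := by
  induction k with
  | zero => simp [CGS.hist]
  | succ k ih => simp [CGS.hist, ih]

lemma play_zero (G : CGS Agt AP S Act) (s : S) (F : Agt → Strategy S Act) :
    G.play s F 0 = s := by
  simp [CGS.play, CGS.hist]

lemma play_succ (G : CGS Agt AP S Act) (s : S) (F : Agt → Strategy S Act) (k : ℕ) :
    G.play s F (k + 1) = G.trans (G.play s F k) (fun i => F i (G.hist s F k)) := by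
  simp [CGS.play, CGS.hist, List.getLast_append]

lemma hist_succ (G : CGS Agt AP S Act) (s : S) (F : Agt → Strategy S Act) (k : ℕ) :
    (G.hist s F (k + 1)).1 = (G.hist s F k).1 ++ [G.play s F (k + 1)] := by
  conv_lhs => rw [CGS.hist]
  rw [play_succ]
  rfl

lemma head_reverse_hist (G : CGS Agt AP S Act) (s : S) (F : Agt → Strategy S Act) (k : ℕ)
    (h : (G.hist s F k).1.reverse ≠ []) :
    (G.hist s F k).1.reverse.head h = G.play s F k := by
  rw [List.head_reverse]
  rfl

lemma dpa_toAPA_lang {Alph : Type} (D : DPA Q Alph) (u : ℕ → Alph) :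
    u ∈ D.toAPA.Lang ↔ u ∈ DPA.Lang D := by
  constructor
  · rintro ⟨rt, hrt⟩
    have step : ∀ τ, τ ∈ rt.T → rt.label τ = D.run u τ.length →
        ∃ n, τ ++ [n] ∈ rt.T ∧ rt.label (τ ++ [n]) = D.run u (τ.length + 1) := by
      intro τ hτ hlab
      have := rt.consistent τ hτ
      simp only [DPA.toAPA, PosBool.Sat, Set.mem_setOf_eq] at this
      obtain ⟨n, hn, hl⟩ := this
      exact ⟨n, hn, by rw [hl, hlab]; rfl⟩
    classical
    let nxt : List ℕ → ℕ := fun τ =>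
      if h : τ ∈ rt.T ∧ rt.label τ = D.run u τ.length then (step τ h.1 h.2).choose else 0
    let seq : ℕ → List ℕ := fun k => Nat.rec [] (fun _ ih => ih ++ [nxt ih]) k
    have hseq : ∀ k, seq k ∈ rt.T ∧ (seq k).length = k ∧ rt.label (seq k) = D.run u k := by
      intro k
      induction k with
      | zero => exact ⟨rt.root_mem, rfl, rt.root_label⟩
      | succ k ih =>
        obtain ⟨h1, h2, h3⟩ := ih
        have hcond : seq k ∈ rt.T ∧ rt.label (seq k) = D.run u (seq k).length := by
          rw [h2]; exact ⟨h1, h3⟩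
        have : seq (k+1) = seq k ++ [(step (seq k) hcond.1 hcond.2).choose] := by
          show seq k ++ [nxt (seq k)] = _
          rw [show nxt (seq k) = (step (seq k) hcond.1 hcond.2).choose from dif_pos hcond]
        obtain ⟨hm, hl⟩ := (step (seq k) hcond.1 hcond.2).choose_spec
        rw [this]
        exact ⟨hm, by simp [h2], by rw [hl, h2]⟩
    have hbr : ∀ k, branchNode (fun k => nxt (seq k)) k = seq k := by
      intro k
      induction k with
      | zero => rfl
      | succ k ih => rw [branchNode_succ, ih]
    have := hrt (fun k => nxt (seq k)) (fun k => by rw [hbr]; exact (hseq k).1)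
    have heq : (fun k => D.toAPA.color (rt.label (branchNode (fun k => nxt (seq k)) k)))
        = fun k => D.color (D.run u k) := by
      funext k
      rw [hbr k, (hseq k).2.2]
      rfl
    rwa [heq] at this
  · intro hu
    refine ⟨⟨{τ | ∀ x ∈ τ, x = 0}, fun τ => D.run u τ.length, by simp, rfl, ?_⟩, ?_⟩
    · intro τ hτ
      show PosBool.Sat _ (.var _)
      refine ⟨0, ?_, ?_⟩
      · intro x hx
        rcases List.mem_append.mp hx with h | h
        · exact hτ x h
        · simpa using h
      · simp only [List.length_append, List.length_singleton]
        rfl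
    · intro b hb
      have heq : (fun k => D.toAPA.color ((fun τ => D.run u τ.length) (branchNode b k)))
          = fun k => D.color (D.run u k) := by
        funext k
        show D.toAPA.color (D.run u (branchNode b k).length) = _
        rw [branchNode_length]
        rfl
      show ParityAccept _
      rw [heq]
      exact hu


lemma head_eq_of_eq {α : Type} {l l' : List α} (h : l = l') (hne : l ≠ []) (hne' : l' ≠ []) :
    l.head hne = l'.head hne' := by cases h; rfl

/-- Auxiliary node map for extracting a strategy from a run tree. -/
noncomputable def nodeAux {Agt S Act : Type} [Nonempty Act] (tr : S → (Agt → Act) → S)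
    (A : Set Agt) (ξ : Set (Agt × Agt)) (stQ : List ℕ → S)
    (aW : List ℕ → ShrVec A ξ Act) (ch : List ℕ → ShrVec (Aᶜ) ξ Act → ℕ) :
    List S → List ℕ
  | [] => []
  | s' :: rest =>
    if h : ∃ a' : ShrVec (Aᶜ) ξ Act,
        s' = tr (stQ (nodeAux tr A ξ stQ aW ch rest))
          (combineVec A (aW (nodeAux tr A ξ stQ aW ch rest)).1 a'.1) then
      nodeAux tr A ξ stQ aW ch rest ++ [ch (nodeAux tr A ξ stQ aW ch rest) h.choose]
    else []

/-- Auxiliary label map for building a run tree from a strategy. -/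
noncomputable def labAux {Agt S Act Var Q : Type} (tr : S → (Agt → Act) → S)
    (A : Set Agt) (ξ : Set (Agt × Agt)) (F : ↥A → Strategy S Act)
    (dec : ℕ → ShrVec (Aᶜ) ξ Act) (s0 : S) {V : Set Var} (π : Var)
    (D : DPA Q (↥(insert π V) → S)) (u : ℕ → ↥V → S) :
    List ℕ → Q × NEList S
  | [] => (D.init, ⟨[s0], by simp⟩)
  | n :: rest =>
    (D.δ (labAux tr A ξ F dec s0 π D u rest).1
        (extendLetter π (u rest.length)
          ((labAux tr A ξ F dec s0 π D u rest).2.1.head (labAux tr A ξ F dec s0 π D u rest).2.2)),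
     ⟨tr ((labAux tr A ξ F dec s0 π D u rest).2.1.head (labAux tr A ξ F dec s0 π D u rest).2.2)
        (combineVec A
          (fun i => F i ⟨(labAux tr A ξ F dec s0 π D u rest).2.1.reverse,
            fun hh => (labAux tr A ξ F dec s0 π D u rest).2.2 (by simpa using hh)⟩)
          (dec n).1) :: (labAux tr A ξ F dec s0 π D u rest).2.1, by simp⟩)

lemma pairhead_congr {Q S : Type} {x y : Q × NEList S} (h : x = y) :
    (x.1, x.2.1.head x.2.2) = (y.1, y.2.1.head y.2.2) := by rw [h]

lemma labAux_cons {Agt S Act Var Q : Type} (tr : S → (Agt → Act) → S)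
    (A : Set Agt) (ξ : Set (Agt × Agt)) (F : ↥A → Strategy S Act)
    (dec : ℕ → ShrVec (Aᶜ) ξ Act) (s0 : S) {V : Set Var} (π : Var)
    (D : DPA Q (↥(insert π V) → S)) (u : ℕ → ↥V → S) (n : ℕ) (rest : List ℕ) :
    labAux tr A ξ F dec s0 π D u (n :: rest) =
    (D.δ (labAux tr A ξ F dec s0 π D u rest).1
        (extendLetter π (u rest.length)
          ((labAux tr A ξ F dec s0 π D u rest).2.1.head (labAux tr A ξ F dec s0 π D u rest).2.2)),
     ⟨tr ((labAux tr A ξ F dec s0 π D u rest).2.1.head (labAux tr A ξ F dec s0 π D u rest).2.2)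
        (combineVec A
          (fun i => F i ⟨(labAux tr A ξ F dec s0 π D u rest).2.1.reverse,
            fun hh => (labAux tr A ξ F dec s0 π D u rest).2.2 (by simpa using hh)⟩)
          (dec n).1) :: (labAux tr A ξ F dec s0 π D u rest).2.1, by simp⟩) := by
  rw [labAux]

lemma toAssign_insert {S Var : Type} (V : Set Var) (π : Var) (Pa : ↥V → ℕ → S) (p : ℕ → S) :
    toAssign (insert π V)
      (fun v k => if h : (v : Var) = π then p k
        else Pa ⟨v, (Set.mem_insert_iff.mp v.2).resolve_left h⟩ k)
      = Function.update (toAssign V Pa) π (some p) := by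
  classical
  funext v
  by_cases hvπ : v = π
  · subst hvπ
    rw [Function.update_self]
    simp only [toAssign]
    rw [dif_pos (Set.mem_insert v V)]
    congr 1
  · rw [Function.update_of_ne hvπ]
    by_cases hvV : v ∈ V
    · simp only [toAssign]
      rw [dif_pos (Set.mem_insert_of_mem π hvV), dif_pos hvV]
      congr 1
      funext k
      rw [dif_neg hvπ]
    · simp only [toAssign]
      rw [dif_neg (fun h => (Set.mem_insert_iff.mp h).elim hvπ hvV), dif_neg hvV]

end ProductAux


theorem product_equiv_ex
    {Agt AP S Act Var Q : Type} [Finite Agt] [Finite S] [Finite Act] [Nonempty Act] [Finite Q]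
    (G : CGS Agt AP S Act) (sDot : S) (V : Set Var) (π : Var) (hπ : π ∉ V)
    (φ' : HState Agt AP Var) (hfree : HState.freeS φ' = insert π V)
    (A : Set Agt) (ξ : Set (Agt × Agt)) (hξ : ξ ⊆ (A ×ˢ A) ∪ ((Aᶜ) ×ˢ (Aᶜ)))
    (D : DPA Q (↥(insert π V) → S))
    (hD : APAEquiv G sDot (insert π V) D.toAPA φ') :
    APAEquiv G sDot V (productEx G sDot A ξ V π D) (HState.ex A ξ π φ') := by
  classical
  intro Pa
  constructor
  · -- automaton ⇒ formula
    rintro ⟨rt, hrt⟩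
    have key : ∀ τ (hτ : τ ∈ rt.T), ∃ a : ShrVec A ξ Act, ∀ a' : ShrVec (Aᶜ) ξ Act,
        ∃ n, τ ++ [n] ∈ rt.T ∧ rt.label (τ ++ [n]) =
          (D.δ (rt.label τ).1 (extendLetter π (zipAssign Pa τ.length) (rt.label τ).2),
           G.trans (rt.label τ).2 (combineVec A a.1 a'.1)) := by
      intro τ hτ
      have h := rt.consistent τ hτ
      simp only [productEx] at h
      rw [sat_iOr] at h
      obtain ⟨a, ha⟩ := h
      rw [sat_iAnd] at ha
      exact ⟨a, fun a' => ha a'⟩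
    choose aW key2 using key
    choose chN hmem hlab using key2
    set aWt : List ℕ → ShrVec A ξ Act := fun τ =>
      if h : τ ∈ rt.T then aW τ h else Classical.arbitrary _ with haWtdef
    set cht : List ℕ → ShrVec (Aᶜ) ξ Act → ℕ := fun τ a' =>
      if h : τ ∈ rt.T then chN τ h a' else 0 with hchtdef
    set stQ : List ℕ → S := fun τ => (rt.label τ).2 with hstQdef
    refine ⟨fun i h => (aWt (nodeAux G.trans A ξ stQ aWt cht ((h.1.drop 1).reverse))).1 i,
      fun i j hij => funext fun h => (aWt _).2 i j hij, ?_⟩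
    intro F' hF'
    set F : ↥A → Strategy S Act :=
      fun i h => (aWt (nodeAux G.trans A ξ stQ aWt cht ((h.1.drop 1).reverse))).1 i with hFdef
    set C : Agt → Strategy S Act := combine A F F' with hCdef
    set p : ℕ → S := G.play sDot C with hpdef
    set Pe : ↥(insert π V) → ℕ → S := fun v k => if h : (v : Var) = π then p k
        else Pa ⟨v, (Set.mem_insert_iff.mp v.2).resolve_left h⟩ k with hPedef
    set w : ℕ → ↥(insert π V) → S := zipAssign Pe with hwdef
    have hwk : ∀ k, extendLetter π (zipAssign Pa k) (p k) = w k := by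
      intro k; funext v
      by_cases h : (v : Var) = π
      · simp [hwdef, zipAssign, hPedef, extendLetter, h]
      · simp [hwdef, zipAssign, hPedef, extendLetter, h]
    set τf : ℕ → List ℕ :=
      fun k => nodeAux G.trans A ξ stQ aWt cht (((G.hist sDot C k).1.drop 1).reverse) with hτf
    set b : ℕ → ℕ := fun k => (τf (k+1)).getLastD 0 with hbdef
    have main : ∀ k, τf k ∈ rt.T ∧ rt.label (τf k) = (D.run w k, p k) ∧
        (τf k).length = k ∧ branchNode b k = τf k := by
      intro k
      induction k with
      | zero =>
        have h0 : τf 0 = [] := by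
          rw [hτf]
          show nodeAux G.trans A ξ stQ aWt cht (((G.hist sDot C 0).1.drop 1).reverse) = []
          rw [show (G.hist sDot C 0).1 = [sDot] from rfl]
          rfl
        refine ⟨by rw [h0]; exact rt.root_mem, ?_, by rw [h0]; rfl, by rw [h0]; rfl⟩
        rw [h0, rt.root_label, hpdef, play_zero]
        rfl
      | succ k ih =>
        obtain ⟨hm, hl, hlen, hbn⟩ := ih
        have hstq : stQ (τf k) = p k := by
          rw [hstQdef]
          show (rt.label (τf k)).2 = p k
          rw [hl]
        have hrev : (((G.hist sDot C (k+1)).1.drop 1).reverse)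
            = p (k+1) :: (((G.hist sDot C k).1.drop 1).reverse) := by
          rw [hist_succ, ← hpdef, List.drop_append, hist_length]
          simp
        have hact : (fun i => C i (G.hist sDot C k)) = combineVec A (aWt (τf k)).1
            ((⟨fun i => F' i (G.hist sDot C k), fun i j hij => congrFun (hF' i j hij) _⟩ :
              ShrVec (Aᶜ) ξ Act)).1 := by
          funext i
          simp only [hCdef, combine, combineVec]
          by_cases hi : i ∈ A
          · rw [dif_pos hi, dif_pos hi, hFdef, hτf]
          · rw [dif_neg hi, dif_neg hi]
        have hcond : ∃ a' : ShrVec (Aᶜ) ξ Act,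
            p (k+1) = G.trans (stQ (τf k)) (combineVec A (aWt (τf k)).1 a'.1) := by
          refine ⟨⟨fun i => F' i (G.hist sDot C k), fun i j hij => congrFun (hF' i j hij) _⟩, ?_⟩
          rw [hstq, ← hact]
          rw [hpdef]
          exact play_succ G sDot C k
        have hτsucc' : ∃ a's : ShrVec (Aᶜ) ξ Act,
            τf (k+1) = τf k ++ [cht (τf k) a's] ∧
            p (k+1) = G.trans (stQ (τf k)) (combineVec A (aWt (τf k)).1 a's.1) := by
          refine ⟨hcond.choose, ?_, hcond.choose_spec⟩
          have hstep : τf (k+1) = nodeAux G.trans A ξ stQ aWt cht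
              (p (k+1) :: (((G.hist sDot C k).1.drop 1).reverse)) := by
            rw [hτf]
            show nodeAux G.trans A ξ stQ aWt cht (((G.hist sDot C (k+1)).1.drop 1).reverse) = _
            rw [hrev]
          rw [hstep, nodeAux, dif_pos hcond]
        obtain ⟨a's, hτsucc, hspec0⟩ := hτsucc'
        have hcht : cht (τf k) a's = chN (τf k) hm a's := by
          rw [hchtdef]
          exact dif_pos hm
        have haWt : aWt (τf k) = aW (τf k) hm := by
          rw [haWtdef]
          exact dif_pos hm
        refine ⟨?_, ?_, ?_, ?_⟩
        · rw [hτsucc, hcht]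
          exact hmem (τf k) hm a's
        · rw [hτsucc, hcht, hlab (τf k) hm a's, hl, hlen]
          dsimp only
          have hspec := hspec0
          rw [hstq, haWt] at hspec
          rw [Prod.mk.injEq]
          refine ⟨?_, hspec.symm⟩
          rw [hwk k]
          rfl
        · rw [hτsucc]
          simp [hlen]
        · have hb' : b k = cht (τf k) a's := by
            rw [hbdef]
            show (τf (k+1)).getLastD 0 = _
            rw [hτsucc]
            simp
          rw [branchNode_succ, hbn, hb', hτsucc]
    have hacc := hrt b (fun k => by rw [(main k).2.2.2]; exact (main k).1)
    have heq : (fun k => (productEx G sDot A ξ V π D).color (rt.label (branchNode b k)))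
        = fun k => D.color (D.run w k) := by
      funext k
      rw [(main k).2.2.2, (main k).2.1]
      rfl
    rw [heq] at hacc
    have hwD : w ∈ DPA.Lang D := hacc
    have hsat := (hD Pe).1 ((dpa_toAPA_lang D w).2 hwD)
    have hPe : toAssign (insert π V) Pe = Function.update (toAssign V Pa) π (some p) :=
      toAssign_insert V π Pa p
    rwa [hPe] at hsat
  · -- formula ⇒ automaton
    intro hsat
    obtain ⟨F, hFshr, hF⟩ := hsat
    letI : Fintype (ShrVec (Aᶜ) ξ Act) := Fintype.ofFinite _
    set N := Fintype.card (ShrVec (Aᶜ) ξ Act) with hN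
    set e := Fintype.equivFin (ShrVec (Aᶜ) ξ Act) with he
    set dec : ℕ → ShrVec (Aᶜ) ξ Act :=
      fun n => if h : n < N then e.symm ⟨n, h⟩ else Classical.arbitrary _ with hdec
    refine ⟨⟨{τ | ∀ x ∈ τ, x < N},
      fun τ => ((labAux G.trans A ξ F dec sDot π D (zipAssign Pa) τ.reverse).1,
        (labAux G.trans A ξ F dec sDot π D (zipAssign Pa) τ.reverse).2.1.head
          (labAux G.trans A ξ F dec sDot π D (zipAssign Pa) τ.reverse).2.2),
      by simp, rfl, ?_⟩, ?_⟩
    · -- consistency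
      intro τ hτ
      simp only [productEx]
      rw [sat_iOr]
      refine ⟨⟨fun i => F i
          ⟨(labAux G.trans A ξ F dec sDot π D (zipAssign Pa) τ.reverse).2.1.reverse,
            fun hh => (labAux G.trans A ξ F dec sDot π D (zipAssign Pa) τ.reverse).2.2
              (by simpa using hh)⟩,
          fun i j hij => congrFun (hFshr i j hij) _⟩, ?_⟩
      rw [sat_iAnd]
      intro a'
      refine ⟨((e a' : Fin N) : ℕ), fun x hx => ?_, ?_⟩
      · rcases List.mem_append.mp hx with h | h
        · exact hτ x h
        · rw [List.mem_singleton.mp h]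
          exact (e a').2
      · have hdeca : dec ((e a' : Fin N) : ℕ) = a' := by
          rw [hdec]
          simp
          intro h; exact absurd (e a').2 (not_lt.mpr h)
        have hrv : (τ ++ [((e a' : Fin N) : ℕ)]).reverse = ((e a' : Fin N) : ℕ) :: τ.reverse := by
          simp
        have hlabeq :=
          (congrArg (labAux G.trans A ξ F dec sDot π D (zipAssign Pa)) hrv).trans
            (labAux_cons G.trans A ξ F dec sDot π D (zipAssign Pa) _ _)
        dsimp only
        rw [pairhead_congr hlabeq]
        dsimp only
        simp only [List.head_cons]
        rw [List.length_reverse, hdeca]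
    · -- acceptance
      intro b hb
      have hbN : ∀ k, b k < N := by
        intro k
        have h1 := hb (k+1)
        rw [branchNode_succ] at h1
        exact h1 (b k) (by simp)
      set F' : ↥(Aᶜ) → Strategy S Act := fun i h => (dec (b (h.1.length - 1))).1 i with hF'def
      have hF'shr : F' ∈ shr (Aᶜ) ξ := by
        intro i j hij
        rw [hF'def]
        exact funext fun h => (dec _).2 i j hij
      have hs := hF F' hF'shr
      set C : Agt → Strategy S Act := combine A F F' with hCdef
      set p : ℕ → S := G.play sDot C with hpdef
      set Pe : ↥(insert π V) → ℕ → S := fun v k => if h : (v : Var) = π then p k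
          else Pa ⟨v, (Set.mem_insert_iff.mp v.2).resolve_left h⟩ k with hPedef
      set w : ℕ → ↥(insert π V) → S := zipAssign Pe with hwdef
      have hwk : ∀ k, extendLetter π (zipAssign Pa k) (p k) = w k := by
        intro k; funext v
        by_cases h : (v : Var) = π
        · simp [hwdef, zipAssign, hPedef, extendLetter, h]
        · simp [hwdef, zipAssign, hPedef, extendLetter, h]
      have main : ∀ k,
          (labAux G.trans A ξ F dec sDot π D (zipAssign Pa) (branchNode b k).reverse).1
            = D.run w k ∧
          (labAux G.trans A ξ F dec sDot π D (zipAssign Pa) (branchNode b k).reverse).2.1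
            = (G.hist sDot C k).1.reverse := by
        intro k
        induction k with
        | zero => exact ⟨rfl, rfl⟩
        | succ k ih =>
          obtain ⟨ih1, ih2⟩ := ih
          have hrv : (branchNode b (k+1)).reverse = b k :: (branchNode b k).reverse := by
            rw [branchNode_succ]
            simp
          have hheadp :
              (labAux G.trans A ξ F dec sDot π D (zipAssign Pa) (branchNode b k).reverse).2.1.head
                (labAux G.trans A ξ F dec sDot π D (zipAssign Pa) (branchNode b k).reverse).2.2
                = p k := by
            rw [head_eq_of_eq ih2 _ (by rw [← ih2]; exact (labAux G.trans A ξ F dec sDot π D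
              (zipAssign Pa) (branchNode b k).reverse).2.2)]
            rw [head_reverse_hist, ← hpdef]
          constructor
          · rw [hrv, labAux]
            dsimp only
            rw [ih1, List.length_reverse, branchNode_length, hheadp, hwk k]
            rw [show D.run w (k+1) = D.δ (D.run w k) (w k) from rfl]
          · rw [hrv, labAux]
            dsimp only
            rw [hist_succ, ← hpdef, List.reverse_append]
            simp only [List.reverse_cons, List.reverse_nil, List.nil_append,
              List.singleton_append]
            congr 1
            · rw [hheadp]
              have hcomb : combineVec A
                  (fun i => F i ⟨(labAux G.trans A ξ F dec sDot π D (zipAssign Pa)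
                      (branchNode b k).reverse).2.1.reverse,
                    fun hh => (labAux G.trans A ξ F dec sDot π D (zipAssign Pa)
                      (branchNode b k).reverse).2.2 (by simpa using hh)⟩)
                  (dec (b k)).1 = fun i => C i (G.hist sDot C k) := by
                funext i
                simp only [combineVec, hCdef, combine]
                by_cases hi : i ∈ A
                · rw [dif_pos hi, dif_pos hi]
                  exact congrArg _ (Subtype.ext (by
                    show (labAux G.trans A ξ F dec sDot π D (zipAssign Pa)
                      (branchNode b k).reverse).2.1.reverse = _
                    rw [ih2, List.reverse_reverse]))
                · rw [dif_neg hi, dif_neg hi, hF'def]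
                  show (dec (b k)).1 ⟨i, hi⟩ = (dec (b ((G.hist sDot C k).1.length - 1))).1 ⟨i, hi⟩
                  rw [hist_length]
                  simp
              rw [hcomb, hpdef]
              exact (play_succ G sDot C k).symm
      have hparity : ParityAccept fun k => D.color (D.run w k) := by
        have hPe : toAssign (insert π V) Pe = Function.update (toAssign V Pa) π (some p) :=
          toAssign_insert V π Pa p
        have hL := (hD Pe).2 (by rw [hPe]; exact hs)
        exact (dpa_toAPA_lang D (zipAssign Pe)).1 hL
      have heq : (fun k => (productEx G sDot A ξ V π D).color
          ((fun τ => ((labAux G.trans A ξ F dec sDot π D (zipAssign Pa) τ.reverse).1,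
            (labAux G.trans A ξ F dec sDot π D (zipAssign Pa) τ.reverse).2.1.head
              (labAux G.trans A ξ F dec sDot π D (zipAssign Pa) τ.reverse).2.2))
            (branchNode b k)))
          = fun k => D.color (D.run w k) := by
        funext k
        dsimp only [productEx]
        rw [(main k).1]
      show ParityAccept _
      rw [heq]
      exact hparity

end HyperATLS
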